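/- Define ω ∈ S_{m+n} by ω(i) = m+1-i for i ∈ {1,...,m} and ω(i) = 2m+n+1-i for i ∈ {m+1,...,m+n}. Let C be an m×n Cauchon diagram with associated permutation v, let k ∈ {1,...,n}, and let (x_1,y_1),...,(x_t,y_t) be the chain rooted at box k on the south-east border. Then ({1,...,m} \ {m+1-x_i : 1 ≤ i ≤ t}) ∪ {2m+n+1-y_i : 1 ≤ i ≤ t} = ({1,...,m} ∪ {m+n-k+1,...,m+n}) \ (ω∘v)({1,...,k}), where (ω∘v)({1,...,k}) denotes the image of {1,...,k} under the composite ω∘v. -/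

import Mathlib

/-- The transposition `s_{a+b-m-1} = (a+b-m-1, a+b-m)` assigned to the grid square `(a,b)`. -/
def sqPerm (m : ℕ) (p : ℕ × ℕ) : Equiv.Perm ℕ :=
  Equiv.swap (p.1 + p.2 - m - 1) (p.1 + p.2 - m)

/-- The reading word of the set of grid squares satisfying `P`: rows are read from the
top (`a = m`) down to the bottom (`a = 1`), and within each row columns are read from the
left (`b = m+1`) to the right (`b = m+n`); factors are multiplied so that the last factor
in reading order is applied first. -/
def readingWord (m n : ℕ) (P : ℕ × ℕ → Bool) : Equiv.Perm ℕ :=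
  ((List.range m).map fun i =>
    (((List.range n).map fun j =>
      if P (m - i, m + 1 + j) then sqPerm m (m - i, m + 1 + j) else 1)).prod).prod

/-- `(a,b)` is a square of the `m × n` grid: `1 ≤ a ≤ m`, `m+1 ≤ b ≤ m+n`. -/
def InGrid (m n : ℕ) (p : ℕ × ℕ) : Prop :=
  1 ≤ p.1 ∧ p.1 ≤ m ∧ m + 1 ≤ p.2 ∧ p.2 ≤ m + n

/-- A colouring (`true` = black, `false` = white) is a Cauchon diagram if for every black
square `(a,b)`, either every square `(a,b')` with `b' < b` is black, or every square
`(a',b)` with `a' > a` is black. -/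
def IsCauchon (m n : ℕ) (col : ℕ × ℕ → Bool) : Prop :=
  ∀ a b, InGrid m n (a, b) → col (a, b) = true →
    (∀ b', m + 1 ≤ b' → b' < b → col (a, b') = true) ∨
    (∀ a', a < a' → a' ≤ m → col (a', b) = true)

/-- The permutation associated to a colouring: the reading word of its set of black squares. -/
def assocPerm (m n : ℕ) (col : ℕ × ℕ → Bool) : Equiv.Perm ℕ :=
  readingWord m n col

/-- `v_{x,y}`: the reading word of the black squares `(a,b)` with `a ≥ x` and `b ≤ y`. -/
def vAt (m n : ℕ) (col : ℕ × ℕ → Bool) (x y : ℕ) : Equiv.Perm ℕ :=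
  readingWord m n fun p => col p && decide (x ≤ p.1) && decide (p.2 ≤ y)

/-- `w_{x,y}`: the reading word of all grid squares `(a,b)` with `a ≥ x` and `b ≤ y`. -/
def wAt (m n x y : ℕ) : Equiv.Perm ℕ :=
  readingWord m n fun p => decide (x ≤ p.1) && decide (p.2 ≤ y)

/-- Box `k` on the south-east border: `(1, m+k)` if `k ≤ n`, and `(k-n+1, m+n)` otherwise. -/
def boxSE (m n k : ℕ) : ℕ × ℕ :=
  if k ≤ n then (1, m + k) else (k - n + 1, m + n)

/-- `(X 1, Y 1), ..., (X t, Y t)` is the chain rooted at the square `(x,y)` of the colouring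
`col` (with `t = 0` for the empty chain). -/
def IsChainRootedAt (m n : ℕ) (col : ℕ × ℕ → Bool) (x y : ℕ)
    (t : ℕ) (X Y : ℕ → ℕ) : Prop :=
  -- every member of the chain is a white square of the grid
  (∀ i, 1 ≤ i → i ≤ t → InGrid m n (X i, Y i) ∧ col (X i, Y i) = false) ∧
  -- if `(x,y)` is white, the chain starts at `(x,y)`
  (col (x, y) = false → 1 ≤ t ∧ X 1 = x ∧ Y 1 = y) ∧
  -- if `(x,y)` is black and the chain is nonempty, it starts at the white square
  -- weakly north-west of `(x,y)` nearest to it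
  (col (x, y) = true → 1 ≤ t →
    x ≤ X 1 ∧ Y 1 ≤ y ∧
      ∀ a b, InGrid m n (a, b) → col (a, b) = false → x ≤ a → b ≤ y →
        X 1 ≤ a ∧ b ≤ Y 1) ∧
  -- the chain is empty only when there is no white square weakly north-west of `(x,y)`
  (t = 0 → ∀ a b, InGrid m n (a, b) → col (a, b) = false → x ≤ a → b ≤ y → False) ∧
  -- inductive step: each next member is the nearest white square strictly north-west
  (∀ i, 1 ≤ i → i < t →
    X i < X (i + 1) ∧ Y (i + 1) < Y i ∧
      ∀ a b, InGrid m n (a, b) → col (a, b) = false → X i < a → b < Y i →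
        X (i + 1) ≤ a ∧ b ≤ Y (i + 1)) ∧
  -- termination: no white square strictly north-west of the last member
  (1 ≤ t → ∀ a b, InGrid m n (a, b) → col (a, b) = false → X t < a → b < Y t → False)

set_option linter.unusedSectionVars false
set_option maxHeartbeats 1000000

/-- result of applying factors `g_{d-1}, ..., g_0` of a row to the value `a + d`,
assuming no increment happens (i.e. we are sliding). -/
def rowG (B : ℕ → Bool) (a : ℕ) : ℕ → ℕ
  | 0 => a
  | d+1 => if B d then rowG B a d else a + d + 1

lemma rowG_cases (B : ℕ → Bool) (a d : ℕ) :
    (rowG B a d = a ∧ ∀ e, e < d → B e = true) ∨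
    ∃ e, e < d ∧ B e = false ∧ rowG B a d = a + e + 1 ∧
      ∀ e', e < e' → e' < d → B e' = true := by
  induction d with
  | zero => left; exact ⟨rfl, by omega⟩
  | succ d ih =>
    by_cases h : B d = true
    · rcases ih with ⟨h1, h2⟩ | ⟨e, he, hB, hG, hall⟩
      · left
        refine ⟨by simp [rowG, h, h1], fun e he => ?_⟩
        rcases Nat.lt_succ_iff_lt_or_eq.mp he with h' | h'
        · exact h2 e h'
        · subst h'; exact h
      · right
        exact ⟨e, by omega, hB, by simp [rowG, h, hG], fun e' h1 h2 => by
          rcases Nat.lt_succ_iff_lt_or_eq.mp h2 with h' | h'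
          · exact hall e' h1 h'
          · subst h'; exact h⟩
    · right
      simp only [Bool.not_eq_true] at h
      exact ⟨d, by omega, h, by simp [rowG, h], by omega⟩

/-- partial row product: factors for columns `m+1, ..., m+L` of row `a`. -/
def rowListP (m : ℕ) (P : ℕ × ℕ → Bool) (a L : ℕ) : Equiv.Perm ℕ :=
  (((List.range L).map fun j => if P (a, m + 1 + j) then sqPerm m (a, m + 1 + j) else 1)).prod

lemma sqPerm_row (m a j : ℕ) : sqPerm m (a, m + 1 + j) = Equiv.swap (a + j) (a + j + 1) := by
  unfold sqPerm
  congr 1 <;> simp <;> omega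

lemma rowListP_succ (m : ℕ) (P : ℕ × ℕ → Bool) (a L : ℕ) :
    rowListP m P a (L+1) =
      rowListP m P a L * (if P (a, m + 1 + L) then Equiv.swap (a + L) (a + L + 1) else 1) := by
  unfold rowListP
  rw [List.range_succ, List.map_append, List.prod_append]
  simp [sqPerm_row]

lemma rowListP_fix (m : ℕ) (P : ℕ × ℕ → Bool) (a : ℕ) :
    ∀ L p, (p < a ∨ a + L < p) → rowListP m P a L p = p := by
  intro L
  induction L with
  | zero => intro p _; simp [rowListP]
  | succ L ih =>
    intro p hp
    rw [rowListP_succ]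
    simp only [Equiv.Perm.mul_apply]
    have h1 : (if P (a, m + 1 + L) then Equiv.swap (a + L) (a + L + 1) else 1) p = p := by
      split
      · exact Equiv.swap_apply_of_ne_of_ne (by omega) (by omega)
      · rfl
    rw [h1]
    exact ih p (by omega)

lemma rowListP_eval (m : ℕ) (P : ℕ × ℕ → Bool) (a : ℕ) :
    ∀ L d, d ≤ L → rowListP m P a L (a + d) =
      if d < L ∧ P (a, m + 1 + d) = true then a + d + 1
      else rowG (fun j => P (a, m + 1 + j)) a d := by
  intro L
  induction L with
  | zero =>
    intro d hd
    have : d = 0 := by omega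
    subst this
    simp [rowListP, rowG]
  | succ L ih =>
    intro d hd
    rw [rowListP_succ]
    simp only [Equiv.Perm.mul_apply]
    rcases Nat.lt_succ_iff_lt_or_eq.mp (Nat.lt_succ_of_le hd) with hdL | hdL
    · -- d ≤ L
      have hdL' : d ≤ L := by omega
      by_cases hP : P (a, m + 1 + L) = true
      · by_cases hdeq : d = L
        · subst hdeq
          simp only [hP, if_true, Equiv.swap_apply_left]
          rw [rowListP_fix m P a d (a + d + 1) (by omega)]
          simp [hP, hdL]
        · have h1 : (if P (a, m + 1 + L) then Equiv.swap (a + L) (a + L + 1) else 1) (a + d) = a + d := by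
            simp only [hP, if_true]
            exact Equiv.swap_apply_of_ne_of_ne (by omega) (by omega)
          rw [h1, ih d hdL']
          have : d < L := by omega
          simp [this, hdL]
      · have h1 : (if P (a, m + 1 + L) then Equiv.swap (a + L) (a + L + 1) else 1) (a + d) = a + d := by
          simp [hP]
        rw [h1, ih d hdL']
        by_cases hdeq : d = L
        · subst hdeq
          simp only [Bool.not_eq_true] at hP
          simp [hP, rowG, hdL]
        · have : d < L := by omega
          simp [this, hdL]
    · -- d = L + 1
      subst hdL
      have hcond : ¬ (L + 1 < L + 1 ∧ P (a, m + 1 + (L+1)) = true) := by omega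
      rw [if_neg hcond]
      by_cases hP : P (a, m + 1 + L) = true
      · simp only [hP, if_true]
        have : Equiv.swap (a + L) (a + L + 1) (a + (L+1)) = a + L := by
          have : a + (L+1) = a + L + 1 := by omega
          rw [this, Equiv.swap_apply_right]
        rw [this, ih L le_rfl]
        simp [rowG, hP]
      · simp only [Bool.not_eq_true] at hP
        simp only [hP, Bool.false_eq_true, if_false, Equiv.Perm.one_apply]
        rw [rowListP_fix m P a L (a + (L+1)) (by omega)]
        simp [rowG, hP]
        omega


/-- value after processing rows `1, ..., a` (bottom up). -/
def rowIter (m n : ℕ) (P : ℕ × ℕ → Bool) : ℕ → ℕ → ℕ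
  | 0, p => p
  | a+1, p => rowListP m P (a+1) n (rowIter m n P a p)

lemma prod_rows_apply (m n : ℕ) (P : ℕ × ℕ → Bool) (p : ℕ) :
    ∀ r, r ≤ m → (((List.range r).map fun i => rowListP m P (m - i) n).prod)
      (rowIter m n P (m - r) p) = rowIter m n P m p := by
  intro r
  induction r with
  | zero => intro _; simp
  | succ r ih =>
    intro hr
    rw [List.range_succ, List.map_append, List.prod_append]
    simp only [List.map_cons, List.map_nil, List.prod_cons, List.prod_nil, mul_one,
      Equiv.Perm.mul_apply]
    have h1 : rowListP m P (m - r) n (rowIter m n P (m - (r+1)) p) = rowIter m n P (m - r) p := by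
      have h2 : m - r = (m - (r+1)) + 1 := by omega
      rw [h2]
      rfl
    rw [h1]
    exact ih (by omega)

lemma readingWord_apply (m n : ℕ) (P : ℕ × ℕ → Bool) (p : ℕ) :
    readingWord m n P p = rowIter m n P m p := by
  have h : readingWord m n P = ((List.range m).map fun i => rowListP m P (m - i) n).prod := rfl
  rw [h]
  have := prod_rows_apply m n P p m le_rfl
  simpa [rowIter] using this



def Xe (X : ℕ → ℕ) : ℕ → ℕ := fun r => if r = 0 then 0 else X r
def Ye (m k : ℕ) (Y : ℕ → ℕ) : ℕ → ℕ := fun r => if r = 0 then m + k + 1 else Y r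

section Chain

variable (m n k t : ℕ) (col : ℕ × ℕ → Bool) (X Y : ℕ → ℕ)
variable (hk : k ≤ n)
variable (hwhite : ∀ i, 1 ≤ i → i ≤ t → InGrid m n (X i, Y i) ∧ col (X i, Y i) = false)
variable (hfirst : ∀ a b, InGrid m n (a, b) → col (a, b) = false → b ≤ m + k →
  1 ≤ t ∧ X 1 ≤ a ∧ b ≤ Y 1)
variable (hstep : ∀ i, 1 ≤ i → i < t →
  X i < X (i + 1) ∧ Y (i + 1) < Y i ∧
    ∀ a b, InGrid m n (a, b) → col (a, b) = false → X i < a → b < Y i →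
      X (i + 1) ≤ a ∧ b ≤ Y (i + 1))
variable (hterm : 1 ≤ t → ∀ a b, InGrid m n (a, b) → col (a, b) = false →
  X t < a → b < Y t → False)

include hwhite hstep in
lemma Xstrict : ∀ i j, 1 ≤ i → i < j → j ≤ t → X i < X j := by
  intro i j hi hij hjt
  induction j with
  | zero => omega
  | succ j ih =>
    have h1 : X j < X (j+1) := (hstep j (by omega) (by omega)).1
    rcases Nat.lt_succ_iff_lt_or_eq.mp hij with h | h
    · exact lt_trans (ih (by omega) (by omega)) h1
    · subst h; exact h1

include hwhite hstep in
lemma Ystrict : ∀ i j, 1 ≤ i → i < j → j ≤ t → Y j < Y i := by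
  intro i j hi hij hjt
  induction j with
  | zero => omega
  | succ j ih =>
    have h1 : Y (j+1) < Y j := (hstep j (by omega) (by omega)).2.1
    rcases Nat.lt_succ_iff_lt_or_eq.mp hij with h | h
    · exact lt_trans h1 (ih (by omega) (by omega))
    · subst h; exact h1

include hk hwhite hfirst hstep hterm in
lemma chainNext : ∀ s r, t - r ≤ s → r ≤ t → ∀ α b, m + 1 ≤ b → b ≤ m + k →
    b < Ye m k Y r → Xe X r < α → α ≤ m → col (α, b) = false →
    (∀ a', Xe X r < a' → a' < α → col (a', b) = true) →
    ∃ r', r < r' ∧ r' ≤ t ∧ α = X r' ∧ b ≤ Y r' := by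
  have xlt : ∀ r, r < t → Xe X r < X (r+1) := by
    intro r hr
    by_cases h : r = 0
    · subst h
      have := (hwhite 1 le_rfl (by omega)).1.1
      simp [Xe]; omega
    · simp only [Xe, if_neg h]
      exact (hstep r (by omega) hr).1
  have c3' : ∀ r, r < t → ∀ α b, InGrid m n (α, b) → col (α, b) = false →
      Xe X r < α → b < Ye m k Y r → b ≤ m + k → X (r+1) ≤ α ∧ b ≤ Y (r+1) := by
    intro r hr α b hg hw hα hb hbk
    by_cases h : r = 0
    · subst h
      have := hfirst α b hg hw hbk
      exact ⟨this.2.1, this.2.2⟩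
    · exact (hstep r (by omega) hr).2.2 α b hg hw (by simpa [Xe, h] using hα)
        (by simpa [Ye, h] using hb)
  have hdead : ∀ r, r = t → ∀ α b, m + 1 ≤ b → b ≤ m + k →
      b < Ye m k Y r → Xe X r < α → α ≤ m → col (α, b) = false → False := by
    intro r hrt α b hb1 hbk hbY hXα hαm hw
    by_cases ht : t = 0
    · have := hfirst α b ⟨by omega, hαm, hb1, by omega⟩ hw hbk
      omega
    · have hXe : Xe X r = X t := by
        rw [hrt]; simp only [Xe, if_neg ht]
      have hYe : Ye m k Y r = Y t := by
        rw [hrt]; simp only [Ye, if_neg ht]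
      exact hterm (by omega) α b ⟨by omega, hαm, hb1, by omega⟩ hw
        (by omega) (by omega)
  intro s
  induction s with
  | zero =>
    intro r hs hr α b hb1 hbk hbY hXα hαm hw hblack
    exact (hdead r (by omega) α b hb1 hbk hbY hXα hαm hw).elim
  | succ s ih =>
    intro r hs hr α b hb1 hbk hbY hXα hαm hw hblack
    by_cases hrt : r = t
    · exact (hdead r hrt α b hb1 hbk hbY hXα hαm hw).elim
    · have hrt' : r < t := by omega
      obtain ⟨hX1, hY1⟩ := c3' r hrt' α b ⟨by omega, hαm, hb1, by omega⟩ hw hXα hbY hbk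
      by_cases hb : b = Y (r+1)
      · have hα : α = X (r+1) := by
          by_contra hne
          have hlt : X (r+1) < α := by omega
          have hbl := hblack (X (r+1)) (xlt r hrt') hlt
          have hwh := (hwhite (r+1) (by omega) (by omega)).2
          rw [hb] at hbl
          rw [hbl] at hwh
          exact Bool.noConfusion hwh
        exact ⟨r+1, by omega, by omega, hα, hY1⟩
      · rcases eq_or_lt_of_le hX1 with hα | hα
        · exact ⟨r+1, by omega, by omega, hα.symm, hY1⟩
        · have hYe1 : Ye m k Y (r+1) = Y (r+1) := by simp [Ye]
          have hXe1 : Xe X (r+1) = X (r+1) := by simp [Xe]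
          have h2 := ih (r+1) (by omega) (by omega) α b hb1 hbk
            (by omega) (by omega) hαm hw
            (fun a' h1 h2 => hblack a' (lt_trans (xlt r hrt') (by omega)) h2)
          obtain ⟨r', hr1, hr2, hr3, hr4⟩ := h2
          exact ⟨r', by omega, hr2, hr3, hr4⟩

/-- The invariant carried along rows: entering row `a` with value `p`, either we are frozen
at some chain row, or we are riding a column east of the chain. -/
def ChainInv (m k t : ℕ) (col : ℕ × ℕ → Bool) (X Y : ℕ → ℕ) (a p : ℕ) : Prop :=
  (∃ r, 1 ≤ r ∧ r ≤ t ∧ p = X r ∧ X r < a) ∨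
  (∃ r b, r ≤ t ∧ Xe X r < a ∧ a ≤ p ∧ a + b = p + m + 1 ∧ b ≤ m + k ∧ b < Ye m k Y r ∧
    ∀ a', Xe X r < a' → a' < a → col (a', b) = true)

include hk hwhite hfirst hstep hterm in
lemma traj_step (hk1 : 1 ≤ k) : ∀ a p, 1 ≤ a → a ≤ m → ChainInv m k t col X Y a p →
    ChainInv m k t col X Y (a+1) (rowListP m col a n p) := by
  intro a p ha ham hinv
  rcases hinv with ⟨r, hr1, hr2, hp, hXa⟩ | ⟨r, b, hrt, hXa, hap, habe, hbk, hbY, hblack⟩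
  · left
    refine ⟨r, hr1, hr2, ?_, by omega⟩
    rw [rowListP_fix m col a n p (Or.inl (by omega))]
    exact hp
  · have hbm : m + 1 ≤ b := by omega
    have hd : p = a + (b - (m+1)) := by omega
    set d := b - (m+1) with hdd
    have hbd : b = m + 1 + d := by omega
    have hdn : d < n := by omega
    have heval := rowListP_eval m col a n d (by omega)
    rw [← hd] at heval
    by_cases hcol : col (a, b) = true
    · -- black square: value increments, ride up the same column
      have hcond : d < n ∧ col (a, m + 1 + d) = true := ⟨hdn, by rw [← hbd]; exact hcol⟩
      rw [heval, if_pos hcond]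
      right
      refine ⟨r, b, hrt, by omega, by omega, by omega, hbk, hbY, ?_⟩
      intro a' h1 h2
      rcases Nat.lt_succ_iff_lt_or_eq.mp h2 with h' | h'
      · exact hblack a' h1 h'
      · subst h'; exact hcol
    · -- white square hit
      have hw : col (a, b) = false := by simpa using hcol
      have hcond : ¬ (d < n ∧ col (a, m + 1 + d) = true) := by
        rw [← hbd]; simp [hw]
      rw [heval, if_neg hcond]
      have hnext := chainNext m n k t col X Y hk hwhite hfirst hstep hterm
        (t - r) r le_rfl hrt a b hbm hbk hbY hXa ham hw hblack
      obtain ⟨r', hr'1, hr'2, hr'3, hr'4⟩ := hnext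
      rcases rowG_cases (fun j => col (a, m + 1 + j)) a d with ⟨hG, _⟩ |
        ⟨e, he, hBe, hG, hall⟩
      · -- slide runs off the left edge: frozen at row a = X r'
        left
        exact ⟨r', by omega, hr'2, by rw [hG]; exact hr'3, by omega⟩
      · -- slide lands one step past a white square in column m+1+e
        right
        have hXe : Xe X r' = X r' := by
          simp only [Xe, if_neg (by omega : ¬ r' = 0)]
        have hYe : Ye m k Y r' = Y r' := by
          simp only [Ye, if_neg (by omega : ¬ r' = 0)]
        refine ⟨r', m + 1 + e, hr'2, by omega, ?_, ?_, by omega, by omega, ?_⟩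
        · rw [hG]; omega
        · rw [hG]; omega
        · intro a' h1 h2
          exfalso
          omega

include hk hwhite hfirst hstep hterm in
lemma traj_inv (hk1 : 1 ≤ k) (j : ℕ) (hj1 : 1 ≤ j) (hjk : j ≤ k) :
    ∀ a, a ≤ m → ChainInv m k t col X Y (a+1) (rowIter m n col a j) := by
  intro a
  induction a with
  | zero =>
    intro _
    right
    refine ⟨0, m + j, by omega, by simp [Xe], by simpa [rowIter] using hj1,
      by simp [rowIter]; omega, by omega, by simp [Ye]; omega, by omega⟩
  | succ a ih =>
    intro ham
    have h1 := ih (by omega)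
    exact traj_step m n k t col X Y hk hwhite hfirst hstep hterm hk1 (a+1)
      (rowIter m n col a j) (by omega) ham h1

include hk hwhite hfirst hstep hterm in
lemma traj_final (hk1 : 1 ≤ k) (j : ℕ) (hj1 : 1 ≤ j) (hjk : j ≤ k) :
    (∃ r, 1 ≤ r ∧ r ≤ t ∧ rowIter m n col m j = X r) ∨
    (m + 1 ≤ rowIter m n col m j ∧ rowIter m n col m j ≤ m + k ∧
      ∀ i, 1 ≤ i → i ≤ t → rowIter m n col m j ≠ Y i) := by
  have hinv := traj_inv m n k t col X Y hk hwhite hfirst hstep hterm hk1 j hj1 hjk m le_rfl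
  set p := rowIter m n col m j with hp
  rcases hinv with ⟨r, hr1, hr2, hpr, _⟩ | ⟨r, b, hrt, hXa, hap, habe, hbk, hbY, hblack⟩
  · exact Or.inl ⟨r, hr1, hr2, hpr⟩
  · right
    have hbp : b = p := by omega
    refine ⟨by omega, by omega, ?_⟩
    intro i hi1 hit hpY
    have hgw := hwhite i hi1 hit
    have hXi1 : 1 ≤ X i := hgw.1.1
    have hXim : X i ≤ m := hgw.1.2.1
    have hXer : Xe X r < X i := by
      by_cases hr0 : r = 0
      · simp only [Xe, if_pos hr0]; omega
      · have hYer : Ye m k Y r = Y r := by simp only [Ye, if_neg hr0]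
        have hXerr : Xe X r = X r := by simp only [Xe, if_neg hr0]
        have hYlt : Y i < Y r := by omega
        have hir : r < i := by
          by_contra hle
          push_neg at hle
          rcases Nat.lt_or_ge i r with h' | h'
          · have := Ystrict m n t col X Y hwhite hstep i r hi1 h' hrt
            omega
          · have hh : Y i = Y r := by rw [(by omega : i = r)]
            omega
        have := Xstrict m n t col X Y hwhite hstep r i (by omega) hir hit
        omega
    have hbl := hblack (X i) hXer (by omega)
    rw [hbp, hpY] at hbl
    rw [hgw.2] at hbl
    exact Bool.noConfusion hbl

end Chain

lemma core_image (m n k t : ℕ) (col : ℕ × ℕ → Bool) (X Y : ℕ → ℕ)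
    (hk1 : 1 ≤ k) (hk : k ≤ n)
    (hwhite : ∀ i, 1 ≤ i → i ≤ t → InGrid m n (X i, Y i) ∧ col (X i, Y i) = false)
    (hfirst : ∀ a b, InGrid m n (a, b) → col (a, b) = false → b ≤ m + k →
      1 ≤ t ∧ X 1 ≤ a ∧ b ≤ Y 1)
    (hstep : ∀ i, 1 ≤ i → i < t →
      X i < X (i + 1) ∧ Y (i + 1) < Y i ∧
        ∀ a b, InGrid m n (a, b) → col (a, b) = false → X i < a → b < Y i →
          X (i + 1) ≤ a ∧ b ≤ Y (i + 1))
    (hterm : 1 ≤ t → ∀ a b, InGrid m n (a, b) → col (a, b) = false →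
      X t < a → b < Y t → False)
    (hY1 : 1 ≤ t → Y 1 ≤ m + k) :
    Finset.image (fun j => readingWord m n col j) (Finset.Icc 1 k) =
      Finset.image X (Finset.Icc 1 t) ∪
        (Finset.Icc (m+1) (m+k) \ Finset.image Y (Finset.Icc 1 t)) := by
  have hYle : ∀ i, 1 ≤ i → i ≤ t → m + 1 ≤ Y i ∧ Y i ≤ m + k := by
    intro i hi1 hit
    refine ⟨(hwhite i hi1 hit).1.2.2.1, ?_⟩
    rcases eq_or_lt_of_le hi1 with h | h
    · rw [← h]; exact hY1 (by omega)
    · have h1 := Ystrict m n t col X Y hwhite hstep 1 i le_rfl h hit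
      have h2 := hY1 (by omega)
      omega
  have hXle : ∀ i, 1 ≤ i → i ≤ t → 1 ≤ X i ∧ X i ≤ m := fun i h1 h2 =>
    ⟨(hwhite i h1 h2).1.1, (hwhite i h1 h2).1.2.1⟩
  have hsub : Finset.image (fun j => readingWord m n col j) (Finset.Icc 1 k) ⊆
      Finset.image X (Finset.Icc 1 t) ∪
        (Finset.Icc (m+1) (m+k) \ Finset.image Y (Finset.Icc 1 t)) := by
    intro u hu
    simp only [Finset.mem_image, Finset.mem_Icc] at hu
    obtain ⟨j, ⟨hj1, hjk⟩, rfl⟩ := hu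
    rw [readingWord_apply]
    rcases traj_final m n k t col X Y hk hwhite hfirst hstep hterm hk1 j hj1 hjk with
      ⟨r, hr1, hr2, hrw⟩ | ⟨h1, h2, h3⟩
    · exact Finset.mem_union_left _
        (Finset.mem_image.mpr ⟨r, Finset.mem_Icc.mpr ⟨hr1, hr2⟩, hrw.symm⟩)
    · apply Finset.mem_union_right
      rw [Finset.mem_sdiff]
      refine ⟨Finset.mem_Icc.mpr ⟨h1, h2⟩, ?_⟩
      intro hmem
      obtain ⟨i, hi, hYi⟩ := Finset.mem_image.mp hmem
      rw [Finset.mem_Icc] at hi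
      exact h3 i hi.1 hi.2 hYi.symm
  have hinjX : Set.InjOn X (Finset.Icc 1 t) := by
    intro i hi j hj hij
    simp only [Finset.coe_Icc, Set.mem_Icc] at hi hj
    by_contra hne
    rcases Nat.lt_or_ge i j with h | h
    · have := Xstrict m n t col X Y hwhite hstep i j hi.1 h hj.2
      omega
    · have := Xstrict m n t col X Y hwhite hstep j i hj.1 (by omega) hi.2
      omega
  have hinjY : Set.InjOn Y (Finset.Icc 1 t) := by
    intro i hi j hj hij
    simp only [Finset.coe_Icc, Set.mem_Icc] at hi hj
    by_contra hne
    rcases Nat.lt_or_ge i j with h | h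
    · have := Ystrict m n t col X Y hwhite hstep i j hi.1 h hj.2
      omega
    · have := Ystrict m n t col X Y hwhite hstep j i hj.1 (by omega) hi.2
      omega
  have hYsub : Finset.image Y (Finset.Icc 1 t) ⊆ Finset.Icc (m+1) (m+k) := by
    intro u hu
    obtain ⟨i, hi, rfl⟩ := Finset.mem_image.mp hu
    rw [Finset.mem_Icc] at hi ⊢
    exact hYle i hi.1 hi.2
  have hcY : (Finset.image Y (Finset.Icc 1 t)).card = t := by
    rw [Finset.card_image_of_injOn hinjY, Nat.card_Icc]
    omega
  have htk : t ≤ k := by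
    have := Finset.card_le_card hYsub
    rw [hcY, Nat.card_Icc] at this
    omega
  have hdisj : Disjoint (Finset.image X (Finset.Icc 1 t))
      (Finset.Icc (m+1) (m+k) \ Finset.image Y (Finset.Icc 1 t)) := by
    rw [Finset.disjoint_left]
    intro u h1 h2
    obtain ⟨i, hi, rfl⟩ := Finset.mem_image.mp h1
    rw [Finset.mem_Icc] at hi
    have := hXle i hi.1 hi.2
    have h3 := (Finset.mem_sdiff.mp h2).1
    rw [Finset.mem_Icc] at h3
    omega
  have hcard_rhs : (Finset.image X (Finset.Icc 1 t) ∪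
      (Finset.Icc (m+1) (m+k) \ Finset.image Y (Finset.Icc 1 t))).card = k := by
    rw [Finset.card_union_of_disjoint hdisj, Finset.card_image_of_injOn hinjX,
      Finset.card_sdiff_of_subset hYsub, hcY, Nat.card_Icc, Nat.card_Icc]
    omega
  have hcard_lhs : (Finset.image (fun j => readingWord m n col j) (Finset.Icc 1 k)).card = k := by
    rw [Finset.card_image_of_injective _ (Equiv.injective (readingWord m n col)), Nat.card_Icc]
    omega
  exact Finset.eq_of_subset_of_card_le hsub (by rw [hcard_rhs, hcard_lhs])

/-- Let `ω ∈ S_{m+n}` map `i ↦ m+1-i` on `{1,...,m}` and `i ↦ 2m+n+1-i` on `{m+1,...,m+n}`.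
Let `col` be an `m × n` Cauchon diagram with associated permutation `v`, let `k ∈ {1,...,n}`,
and let `(X 1, Y 1),...,(X t, Y t)` be the chain rooted at box `k` on the south-east border.
Then `({1,...,m} \ {m+1-X i}) ∪ {2m+n+1-Y i} =
({1,...,m} ∪ {m+n-k+1,...,m+n}) \ (ω ∘ v)({1,...,k})`. -/
theorem grassmannNecklace_term_low
    (m n : ℕ) (hm : 2 ≤ m) (hn : 2 ≤ n)
    (ω : Equiv.Perm ℕ)
    (hω1 : ∀ i, 1 ≤ i → i ≤ m → ω i = m + 1 - i)
    (hω2 : ∀ i, m + 1 ≤ i → i ≤ m + n → ω i = 2 * m + n + 1 - i)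
    (hω3 : ∀ i, i = 0 ∨ m + n < i → ω i = i)
    (col : ℕ × ℕ → Bool) (hC : IsCauchon m n col)
    (k : ℕ) (hk1 : 1 ≤ k) (hkn : k ≤ n)
    (t : ℕ) (X Y : ℕ → ℕ)
    (hchain : IsChainRootedAt m n col (boxSE m n k).1 (boxSE m n k).2 t X Y) :
    (Finset.Icc 1 m \ Finset.image (fun i => m + 1 - X i) (Finset.Icc 1 t)) ∪
        Finset.image (fun i => 2 * m + n + 1 - Y i) (Finset.Icc 1 t) =
      (Finset.Icc 1 m ∪ Finset.Icc (m + n - k + 1) (m + n)) \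
        Finset.image (fun j => ω (assocPerm m n col j)) (Finset.Icc 1 k) := by
  have hbox1 : (boxSE m n k).1 = 1 := by simp [boxSE, hkn]
  have hbox2 : (boxSE m n k).2 = m + k := by simp [boxSE, hkn]
  obtain ⟨h1, h2, h3, h4, h5, h6⟩ := hchain
  rw [hbox1, hbox2] at h2 h3 h4
  have hwhite := h1
  have hstep := h5
  have hterm := h6
  have hfirst : ∀ a b, InGrid m n (a, b) → col (a, b) = false → b ≤ m + k →
      1 ≤ t ∧ X 1 ≤ a ∧ b ≤ Y 1 := by
    intro a b hg hw hb
    have ht : 1 ≤ t := by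
      by_contra ht0
      exact h4 (by omega) a b hg hw hg.1 hb
    rcases Bool.eq_false_or_eq_true (col (1, m+k)) with hbc | hbc
    · obtain ⟨_, hY1le, hnear⟩ := h3 hbc ht
      obtain ⟨ha, hbb⟩ := hnear a b hg hw hg.1 hb
      exact ⟨ht, ha, hbb⟩
    · obtain ⟨_, hX1, hY1⟩ := h2 hbc
      exact ⟨ht, by rw [hX1]; exact hg.1, by rw [hY1]; exact hb⟩
  have hY1 : 1 ≤ t → Y 1 ≤ m + k := by
    intro ht
    rcases Bool.eq_false_or_eq_true (col (1, m+k)) with hbc | hbc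
    · exact (h3 hbc ht).2.1
    · rw [(h2 hbc).2.2]
  have hcore := core_image m n k t col X Y hk1 hkn hwhite hfirst hstep hterm hY1
  have hXle : ∀ i, 1 ≤ i → i ≤ t → 1 ≤ X i ∧ X i ≤ m := fun i ha hb =>
    ⟨(hwhite i ha hb).1.1, (hwhite i ha hb).1.2.1⟩
  have hYle : ∀ i, 1 ≤ i → i ≤ t → m + 1 ≤ Y i ∧ Y i ≤ m + k := by
    intro i hi1 hit
    refine ⟨(hwhite i hi1 hit).1.2.2.1, ?_⟩
    rcases eq_or_lt_of_le hi1 with h | h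
    · rw [← h]; exact hY1 (by omega)
    · have ha := Ystrict m n t col X Y hwhite hstep 1 i le_rfl h hit
      have hb := hY1 (by omega)
      omega
  have himg : Finset.image (fun j => ω (assocPerm m n col j)) (Finset.Icc 1 k)
      = Finset.image (fun i => m + 1 - X i) (Finset.Icc 1 t) ∪
        (Finset.Icc (m+n-k+1) (m+n) \
          Finset.image (fun i => 2 * m + n + 1 - Y i) (Finset.Icc 1 t)) := by
    have e1 : Finset.image (fun j => ω (assocPerm m n col j)) (Finset.Icc 1 k)
        = Finset.image (fun u => ω u)
            (Finset.image (fun j => readingWord m n col j) (Finset.Icc 1 k)) := by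
      rw [Finset.image_image]
      rfl
    rw [e1, hcore, Finset.image_union]
    congr 1
    · rw [Finset.image_image]
      apply Finset.image_congr
      intro i hi
      simp only [Finset.coe_Icc, Set.mem_Icc] at hi
      have hb := hXle i hi.1 hi.2
      simp only [Function.comp_apply]
      exact hω1 (X i) hb.1 hb.2
    · rw [Finset.image_sdiff _ _ (Equiv.injective ω)]
      congr 1
      · ext u
        simp only [Finset.mem_image, Finset.mem_Icc]
        constructor
        · rintro ⟨b, hb, rfl⟩
          rw [hω2 b (by omega) (by omega)]
          omega
        · intro hu
          refine ⟨2*m+n+1-u, by omega, ?_⟩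
          rw [hω2 _ (by omega) (by omega)]
          omega
      · rw [Finset.image_image]
        apply Finset.image_congr
        intro i hi
        simp only [Finset.coe_Icc, Set.mem_Icc] at hi
        have hb := hYle i hi.1 hi.2
        simp only [Function.comp_apply]
        exact hω2 (Y i) hb.1 (by omega)
  rw [himg]
  ext u
  simp only [Finset.mem_union, Finset.mem_sdiff, Finset.mem_Icc]
  constructor
  · rintro (⟨⟨hu1, hum⟩, hnA⟩ | hB')
    · refine ⟨Or.inl ⟨hu1, hum⟩, ?_⟩
      rintro (hA' | ⟨⟨hj1, hj2⟩, _⟩)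
      · exact hnA hA'
      · omega
    · have hBu : m+n-k+1 ≤ u ∧ u ≤ m+n := by
        obtain ⟨i, hi, rfl⟩ := Finset.mem_image.mp hB'
        rw [Finset.mem_Icc] at hi
        have := hYle i hi.1 hi.2
        omega
      refine ⟨Or.inr hBu, ?_⟩
      rintro (hA' | ⟨_, hnB⟩)
      · obtain ⟨i, hi, hh⟩ := Finset.mem_image.mp hA'
        rw [Finset.mem_Icc] at hi
        have := hXle i hi.1 hi.2
        omega
      · exact hnB hB'
  · rintro ⟨hu, hn⟩
    push_neg at hn
    obtain ⟨hnA, hnJB⟩ := hn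
    rcases hu with ⟨ha, hb⟩ | ⟨ha, hb⟩
    · exact Or.inl ⟨⟨ha, hb⟩, hnA⟩
    · exact Or.inr (hnJB ⟨ha, hb⟩)
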